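/- For m > 1, the center of the Baumslag-Solitar group B(m,m) is the infinite cyclic subgroup generated by bᵐ. -/

import Mathlib

/-- The defining relation of the Baumslag-Solitar group `B(m,n)`:
`a⁻¹ bᵐ a = bⁿ`, where `a` is `FreeGroup.of false` and `b` is `FreeGroup.of true`. -/
def BSrel (m n : ℤ) : Set (FreeGroup Bool) :=
  {(FreeGroup.of false)⁻¹ * (FreeGroup.of true) ^ m * FreeGroup.of false *
    ((FreeGroup.of true) ^ n)⁻¹}

/-- The Baumslag-Solitar group `B(m,n) = ⟨a, b | a⁻¹ bᵐ a = bⁿ⟩`. -/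
abbrev BS (m n : ℤ) : Type := PresentedGroup (BSrel m n)

/-- The generator `a` of `B(m,n)`. -/
def BSa (m n : ℤ) : BS m n := PresentedGroup.of false

/-- The generator `b` of `B(m,n)`. -/
def BSb (m n : ℤ) : BS m n := PresentedGroup.of true

namespace BSAux
open FreeGroup SemidirectProduct List
open FreeGroup SemidirectProduct List


variable (m : ℤ)

def τ : MulAut (FreeGroup (ZMod m.toNat)) :=
  (FreeGroup.freeGroupCongr (Equiv.addRight (1 : ZMod m.toNat)))

lemma τ_of (i : ZMod m.toNat) : τ m (FreeGroup.of i) = FreeGroup.of (i + 1) := by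
  simp [τ]

lemma τ_inv_of (i : ZMod m.toNat) : (τ m)⁻¹ (FreeGroup.of i) = FreeGroup.of (i - 1) := by
  simp [τ, MulAut.inv_def, sub_eq_add_neg]

lemma τ_coe (w : FreeGroup (ZMod m.toNat)) :
    τ m w = FreeGroup.map (fun i => i + 1) w := rfl

def φ : Multiplicative ℤ →* MulAut (FreeGroup (ZMod m.toNat)) := zpowersHom _ (τ m)

lemma τ_zpow_of (k : ℤ) : ∀ i : ZMod m.toNat,
    (τ m ^ k) (FreeGroup.of i) = FreeGroup.of (i + k) := by
  induction k using Int.induction_on with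
  | zero => intro i; simp
  | succ k ih =>
    intro i
    rw [zpow_add_one, MulAut.mul_apply, τ_of, ih]
    push_cast; ring_nf
  | pred k ih =>
    intro i
    rw [zpow_sub_one, MulAut.mul_apply, τ_inv_of, ih]
    push_cast; ring_nf

lemma φ_of (k : ℤ) (i : ZMod m.toNat) :
    φ m (Multiplicative.ofAdd k) (FreeGroup.of i) = FreeGroup.of (i + k) := by
  rw [φ, zpowersHom_apply]; exact τ_zpow_of m k i

lemma cast_m_eq_zero (hm : 1 < m) : ((m : ℤ) : ZMod m.toNat) = 0 := by
  rw [show (m : ℤ) = (m.toNat : ℤ) by omega]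
  push_cast
  exact ZMod.natCast_self _

lemma φ_m (hm : 1 < m) : φ m (Multiplicative.ofAdd m) = 1 := by
  apply MulEquiv.toMonoidHom_injective
  apply FreeGroup.ext_hom
  intro i
  show φ m (Multiplicative.ofAdd m) (FreeGroup.of i) = (1 : MulAut _) (FreeGroup.of i)
  rw [φ_of, cast_m_eq_zero m hm]
  simp

abbrev Gm := SemidirectProduct (FreeGroup (ZMod m.toNat)) (Multiplicative ℤ) (φ m)



variable {α : Type*} [DecidableEq α]

abbrev P : α × Bool → α × Bool → Prop := fun a b => ¬(a.1 = b.1 ∧ a.2 = !b.2)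

lemma chain'_reduce (L : List (α × Bool)) : List.Chain' P (FreeGroup.reduce L) := by
  show List.IsChain P _
  induction L with
  | nil => simp
  | cons x t ih =>
    rw [FreeGroup.reduce.cons]
    cases h : FreeGroup.reduce t with
    | nil => simp
    | cons y s =>
      rw [h] at ih
      by_cases hc : x.1 = y.1 ∧ x.2 = !y.2
      · simpa [hc] using ih.tail
      · simpa [hc] using List.IsChain.cons_cons hc ih

lemma reduce_eq_self_of_chain' {L : List (α × Bool)} (h : List.Chain' P L) :
    FreeGroup.reduce L = L := by
  induction L with
  | nil => rfl
  | cons x t ih =>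
    rw [FreeGroup.reduce.cons, ih h.tail]
    cases t with
    | nil => rfl
    | cons y s =>
      have hc : ¬(x.1 = y.1 ∧ x.2 = !y.2) := (List.isChain_cons_cons.1 h).1
      simp [hc]

lemma toWord_map {β : Type*} [DecidableEq β] (f : α → β) (hf : Function.Injective f)
    (w : FreeGroup α) :
    (FreeGroup.map f w).toWord = w.toWord.map (fun p => (f p.1, p.2)) := by
  conv_lhs => rw [← FreeGroup.mk_toWord (x := w)]
  rw [FreeGroup.map.mk, FreeGroup.toWord_mk]
  apply reduce_eq_self_of_chain'
  rw [List.Chain', List.isChain_map]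
  have h := chain'_reduce (α := α) w.toWord
  rw [FreeGroup.reduce_toWord] at h
  exact h.imp (fun {a b} hab hc => hab ⟨hf hc.1, hc.2⟩)

lemma eq_one_of_map_eq_self (f : α → α) (hinj : Function.Injective f)
    (hfp : ∀ x, f x ≠ x) {w : FreeGroup α} (h : FreeGroup.map f w = w) : w = 1 := by
  have h2 := congrArg FreeGroup.toWord h
  rw [toWord_map f hinj] at h2
  cases hw : w.toWord with
  | nil => exact FreeGroup.toWord_eq_nil_iff.1 hw
  | cons p t =>
    rw [hw, List.map_cons] at h2
    have := (List.cons.injEq _ _ _ _ ▸ h2).1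
    exact absurd (congrArg Prod.fst this) (hfp p.1)


variable (m : ℤ)

lemma one_ne_zero_zmod (hm : 1 < m) : (1 : ZMod m.toNat) ≠ 0 := by
  haveI : Fact (1 < m.toNat) := ⟨by omega⟩
  exact one_ne_zero

lemma center_Gm (hm : 1 < m) :
    Subgroup.center (Gm m) = Subgroup.zpowers (inr (Multiplicative.ofAdd m) : Gm m) := by
  apply _root_.le_antisymm
  · intro z hz
    rw [Subgroup.mem_center_iff] at hz
    -- commuting with inr (ofAdd 1) gives τ z.left = z.left
    have h1 := congrArg SemidirectProduct.left (hz (inr (Multiplicative.ofAdd (1:ℤ))))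
    simp only [mul_left, left_inr, right_inr, one_mul, map_one] at h1
    -- h1 : φ (ofAdd 1) z.left = z.left * 1 or so; inspect
    have hτ : φ m (Multiplicative.ofAdd (1:ℤ)) = τ m := by
      rw [show φ m = zpowersHom _ (τ m) from rfl, zpowersHom_apply]; simp
    simp only [_root_.map_one, mul_one, hτ] at h1
    have hw : z.left = 1 := by
      apply eq_one_of_map_eq_self (fun i : ZMod m.toNat => i + 1)
        (fun a b hab => by simpa using hab)
        (fun x hx => one_ne_zero_zmod m hm (by linear_combination (norm := ring_nf) hx - x))
      rw [← τ_coe]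
      exact h1
    -- commuting with inl (of 0) gives (z.right : ZMod) = 0
    have h2 := congrArg SemidirectProduct.left (hz (inl (FreeGroup.of (0 : ZMod m.toNat))))
    simp only [mul_left, left_inl, right_inl, hw, one_mul, mul_one] at h2
    rw [show z.right = Multiplicative.ofAdd (z.right.toAdd) from rfl, φ_of] at h2
    have h3 : ((z.right.toAdd : ℤ) : ZMod m.toNat) = 0 := by
      have := FreeGroup.of_injective h2
      simpa using this.symm
    rw [ZMod.intCast_zmod_eq_zero_iff_dvd] at h3
    obtain ⟨j, hj⟩ := h3
    refine ⟨j, ?_⟩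
    show (inr (Multiplicative.ofAdd m) : Gm m) ^ j = z
    have hmt : ((m.toNat : ℤ)) = m := by omega
    rw [hmt] at hj
    have : (inr (Multiplicative.ofAdd m) : Gm m) ^ j = inr (Multiplicative.ofAdd (m * j)) := by
      rw [← map_zpow]
      congr 1
      rw [← ofAdd_zsmul]
      congr 1
      simp [mul_comm]
    rw [this]
    ext
    · rw [left_inr, hw]
    · rw [right_inr, ← hj]
      simp
  · rw [Subgroup.zpowers_le, Subgroup.mem_center_iff]
    intro g
    ext
    · simp [mul_left, φ_m m hm]
    · simp [mul_right, mul_comm]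

open FreeGroup SemidirectProduct

variable (m : ℤ)

-- relation inside BS
lemma BS_rel : (BSa m m)⁻¹ * (BSb m m) ^ m * BSa m m * ((BSb m m) ^ m)⁻¹ = 1 := by
  have h : ((FreeGroup.of false)⁻¹ * (FreeGroup.of true) ^ m * FreeGroup.of false *
      ((FreeGroup.of true) ^ m)⁻¹ : FreeGroup Bool) ∈ BSrel m m := rfl
  have h2 : PresentedGroup.mk (BSrel m m) ((FreeGroup.of false)⁻¹ * (FreeGroup.of true) ^ m *
      FreeGroup.of false * ((FreeGroup.of true) ^ m)⁻¹) = 1 := by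
    rw [PresentedGroup.mk]
    exact (QuotientGroup.eq_one_iff _).2 (Subgroup.subset_normalClosure h)
  exact h2

lemma BS_comm : Commute ((BSb m m) ^ m) (BSa m m) := by
  have := BS_rel m
  rw [mul_inv_eq_one] at this
  have h : (BSb m m) ^ m * BSa m m = BSa m m * ((BSa m m)⁻¹ * (BSb m m) ^ m * BSa m m) := by
    group
  rw [this] at h
  exact h

lemma conj_eq (s t : ℤ) (hm : 1 < m)
    (h : ((s : ZMod m.toNat)) = (t : ZMod m.toNat)) :
    (BSb m m) ^ s * BSa m m * (BSb m m) ^ (-s) =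
      (BSb m m) ^ t * BSa m m * (BSb m m) ^ (-t) := by
  have hd : ((m.toNat : ℤ)) ∣ s - t := by
    rw [← ZMod.intCast_zmod_eq_zero_iff_dvd]
    push_cast
    rw [h]; ring
  rw [show ((m.toNat : ℤ)) = m by omega] at hd
  obtain ⟨j, hj⟩ := hd
  have hs : s = t + m * j := by omega
  subst hs
  have hc : ((BSb m m) ^ m) ^ j * BSa m m * (((BSb m m) ^ m) ^ j)⁻¹ = BSa m m := by
    rw [((BS_comm m).zpow_left j).eq, mul_inv_cancel_right]
  calc (BSb m m) ^ (t + m * j) * BSa m m * (BSb m m) ^ (-(t + m * j))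
      = (BSb m m) ^ t * (((BSb m m) ^ m) ^ j * BSa m m * (((BSb m m) ^ m) ^ j)⁻¹) *
        (BSb m m) ^ (-t) := by
        rw [← zpow_mul]
        group
    _ = (BSb m m) ^ t * BSa m m * (BSb m m) ^ (-t) := by rw [hc]


section Homs
variable (m : ℤ)

def fb : Bool → Gm m := fun x => if x then inr (Multiplicative.ofAdd (1:ℤ)) else inl (FreeGroup.of 0)

lemma inr_pow_m : (inr (Multiplicative.ofAdd (1:ℤ)) : Gm m) ^ m = inr (Multiplicative.ofAdd m) := by
  rw [← map_zpow]
  congr 1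
  rw [← ofAdd_zsmul]
  congr 1
  simp

lemma comm_Gm (hm : 1 < m) : (inr (Multiplicative.ofAdd m) : Gm m) * inl (FreeGroup.of 0) =
    inl (FreeGroup.of 0) * inr (Multiplicative.ofAdd m) := by
  ext
  · simp [mul_left, φ_m m hm]
  · simp [mul_right]

lemma relh (hm : 1 < m) : ∀ r ∈ BSrel m m, FreeGroup.lift (fb m) r = 1 := by
  intro r hr
  rw [BSrel, Set.mem_singleton_iff] at hr
  subst hr
  simp only [_root_.map_mul, _root_.map_inv, map_zpow, FreeGroup.lift_apply_of, fb, if_true, if_false,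
    Bool.false_eq_true, ite_false, ite_true]
  rw [inr_pow_m m, mul_assoc (inl (FreeGroup.of 0))⁻¹, comm_Gm m hm]
  group

/-- The hom `BS m m →* Gm m`. -/
def fBG (hm : 1 < m) : BS m m →* Gm m := PresentedGroup.toGroup (relh m hm)

lemma fBG_a (hm : 1 < m) : fBG m hm (BSa m m) = inl (FreeGroup.of 0) := by
  show PresentedGroup.toGroup (relh m hm) (PresentedGroup.of false) = _
  rw [PresentedGroup.toGroup.of]
  rfl

lemma fBG_b (hm : 1 < m) : fBG m hm (BSb m m) = inr (Multiplicative.ofAdd (1:ℤ)) := by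
  show PresentedGroup.toGroup (relh m hm) (PresentedGroup.of true) = _
  rw [PresentedGroup.toGroup.of]
  rfl

def g1 : FreeGroup (ZMod m.toNat) →* BS m m :=
  FreeGroup.lift (fun i : ZMod m.toNat =>
    (BSb m m) ^ (i.val : ℤ) * BSa m m * (BSb m m) ^ (-(i.val : ℤ)))

def g2 : Multiplicative ℤ →* BS m m := zpowersHom _ (BSb m m)

lemma g1_of (i : ZMod m.toNat) :
    g1 m (FreeGroup.of i) = (BSb m m) ^ (i.val : ℤ) * BSa m m * (BSb m m) ^ (-(i.val : ℤ)) := by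
  show FreeGroup.lift _ (FreeGroup.of i) = _
  rw [FreeGroup.lift_apply_of]

lemma compat (hm : 1 < m) : ∀ g : Multiplicative ℤ,
    (g1 m).comp ((φ m) g).toMonoidHom = (MulAut.conj ((g2 m) g)).toMonoidHom.comp (g1 m) := by
  haveI : NeZero m.toNat := ⟨by omega⟩
  intro g
  apply FreeGroup.ext_hom
  intro i
  simp only [MonoidHom.comp_apply, MulEquiv.coe_toMonoidHom, MulAut.conj_apply]
  rw [show g = Multiplicative.ofAdd g.toAdd from rfl, φ_of, g1_of, g1_of]
  show _ = g2 m (Multiplicative.ofAdd g.toAdd) * _ * (g2 m (Multiplicative.ofAdd g.toAdd))⁻¹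
  rw [show g2 m (Multiplicative.ofAdd g.toAdd) = (BSb m m) ^ g.toAdd from by
    show zpowersHom _ _ _ = _
    rw [zpowersHom_apply, toAdd_ofAdd]]
  set k := g.toAdd with hk
  set b := BSb m m
  set a := BSa m m
  have rhs_eq : b ^ k * (b ^ (i.val:ℤ) * a * b ^ (-(i.val:ℤ))) * (b ^ k)⁻¹ =
      b ^ (k + (i.val:ℤ)) * a * b ^ (-(k + (i.val:ℤ))) := by
    rw [zpow_add, neg_add, zpow_add]
    group
  rw [rhs_eq]
  apply conj_eq m _ _ hm
  push_cast
  rw [ZMod.natCast_val, ZMod.natCast_val, ZMod.cast_id, ZMod.cast_id]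
  ring

def gGB (hm : 1 < m) : Gm m →* BS m m := SemidirectProduct.lift (g1 m) (g2 m) (compat m hm)

lemma gGB_inl (hm : 1 < m) (w : FreeGroup (ZMod m.toNat)) :
    gGB m hm (inl w) = g1 m w := SemidirectProduct.lift_inl _ _ _ _

lemma gGB_inr (hm : 1 < m) (g : Multiplicative ℤ) :
    gGB m hm (inr g) = g2 m g := SemidirectProduct.lift_inr _ _ _ _

lemma gf_id (hm : 1 < m) : (gGB m hm).comp (fBG m hm) = MonoidHom.id _ := by
  haveI : NeZero m.toNat := ⟨by omega⟩
  apply PresentedGroup.ext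
  intro x
  cases x
  · show gGB m hm (fBG m hm (BSa m m)) = BSa m m
    rw [fBG_a, gGB_inl, g1_of]
    simp [ZMod.val_zero]
  · show gGB m hm (fBG m hm (BSb m m)) = BSb m m
    rw [fBG_b, gGB_inr]
    show zpowersHom _ _ _ = _
    rw [zpowersHom_apply, toAdd_ofAdd, zpow_one]

lemma fg_id (hm : 1 < m) : (fBG m hm).comp (gGB m hm) = MonoidHom.id _ := by
  haveI : NeZero m.toNat := ⟨by omega⟩
  apply SemidirectProduct.hom_ext
  · apply FreeGroup.ext_hom
    intro i
    simp only [MonoidHom.comp_apply, MonoidHom.id_apply]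
    rw [gGB_inl, g1_of]
    rw [_root_.map_mul, _root_.map_mul, map_zpow, map_zpow, fBG_a, fBG_b]
    rw [← map_zpow (inr : Multiplicative ℤ →* Gm m), ← map_zpow (inr : Multiplicative ℤ →* Gm m)]
    have h1 : (Multiplicative.ofAdd (1:ℤ)) ^ (i.val:ℤ) = Multiplicative.ofAdd (i.val:ℤ) := by
      rw [← ofAdd_zsmul]; simp
    have h2 : (Multiplicative.ofAdd (1:ℤ)) ^ (-(i.val:ℤ)) = (Multiplicative.ofAdd (i.val:ℤ))⁻¹ := by
      rw [← ofAdd_zsmul]; simp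
    rw [h1, h2, ← inl_aut]
    rw [φ_of]
    congr 2
    rw [zero_add]
    push_cast
    rw [ZMod.natCast_val, ZMod.cast_id]
  · apply MonoidHom.ext_mint
    simp only [MonoidHom.comp_apply, MonoidHom.id_apply]
    rw [gGB_inr]
    rw [show g2 m (Multiplicative.ofAdd (1:ℤ)) = BSb m m from by
      show zpowersHom _ _ _ = _
      rw [zpowersHom_apply, toAdd_ofAdd, zpow_one]]
    rw [fBG_b]

end Homs
end BSAux

open BSAux SemidirectProduct in
/-- For `m > 1`, the center of `B(m,m)` is the infinite cyclic subgroup generated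
by `bᵐ`. -/
theorem BS_m_m_center (m : ℤ) (hm : 1 < m) :
    Subgroup.center (BS m m) = Subgroup.zpowers (BSb m m ^ m) ∧
      ¬ IsOfFinOrder (BSb m m ^ m) := by
  have hgf : ∀ x, gGB m hm (fBG m hm x) = x := fun x => DFunLike.congr_fun (gf_id m hm) x
  have hfg : ∀ y, fBG m hm (gGB m hm y) = y := fun y => DFunLike.congr_fun (fg_id m hm) y
  have hinj : Function.Injective (fBG m hm) := fun x y h => by
    rw [← hgf x, ← hgf y, h]
  have hsurj : Function.Surjective (fBG m hm) := fun y => ⟨gGB m hm y, hfg y⟩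
  have hfbm : fBG m hm ((BSb m m) ^ m) = inr (Multiplicative.ofAdd m) := by
    rw [map_zpow, fBG_b, inr_pow_m]
  constructor
  · ext z
    constructor
    · intro hz
      have hzc : fBG m hm z ∈ Subgroup.center (Gm m) := by
        rw [Subgroup.mem_center_iff]
        intro y
        obtain ⟨x, rfl⟩ := hsurj y
        rw [← _root_.map_mul, ← _root_.map_mul, Subgroup.mem_center_iff.1 hz x]
      rw [center_Gm m hm] at hzc
      obtain ⟨j, hj⟩ := hzc
      refine ⟨j, hinj ?_⟩
      rw [map_zpow, hfbm]
      exact hj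
    · intro hz
      obtain ⟨j, hj⟩ := hz
      rw [Subgroup.mem_center_iff]
      intro x
      have hc : (inr (Multiplicative.ofAdd m) : Gm m) ∈ Subgroup.center (Gm m) := by
        rw [center_Gm m hm]
        exact Subgroup.mem_zpowers _
      apply hinj
      rw [_root_.map_mul, _root_.map_mul, ← hj, map_zpow, hfbm]
      exact Subgroup.mem_center_iff.1 ((Subgroup.center (Gm m)).zpow_mem hc j) (fBG m hm x)
  · intro hfin
    have h1 : IsOfFinOrder ((rightHom : Gm m →* Multiplicative ℤ) (fBG m hm ((BSb m m) ^ m))) :=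
      MonoidHom.isOfFinOrder _ (MonoidHom.isOfFinOrder _ hfin)
    rw [hfbm, rightHom_inr] at h1
    obtain ⟨n, hn, hpow⟩ := isOfFinOrder_iff_pow_eq_one.1 h1
    have h2 := congrArg Multiplicative.toAdd hpow
    rw [toAdd_pow, toAdd_ofAdd] at h2
    have h3 : (n : ℤ) * m = 0 := by
      have : Multiplicative.toAdd (1 : Multiplicative ℤ) = 0 := rfl
      rw [this] at h2
      rw [← h2]; simp [nsmul_eq_mul]
    rcases mul_eq_zero.1 h3 with h | h
    · have : n = 0 := by exact_mod_cast h
      omega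
    · omega
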